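/- For any Delannoy path W in Del(n+1,n-1,l) (which has more E's than N's, so its minimum depth is negative), replacing the step immediately after the last position achieving maximal depth (that step is necessarily an E) with an N yields a bad path in Del(n,n,l), and this operation is inverse to the map that replaces the first deepest step of a bad path in Del(n,n,l) with an E. -/

import Mathlib

inductive Step : Type
  | E | D | N
deriving DecidableEq

instance instFintypeStep : Fintype Step :=
  ⟨{Step.E, Step.D, Step.N}, by intro x; cases x <;> simp⟩

open Step Polynomial

/-- All words of length `l` over the step alphabet. -/
def Words (l : ℕ) : Finset (List Step) :=
  (Finset.univ : Finset (Fin l → Step)).image List.ofFn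

/-- Delannoy paths from (0,0) to (m,n) with `l` steps, encoded as words:
`#E + #D = m`, `#N + #D = n`, length `l`. -/
def DelSet (m n l : ℕ) : Finset (List Step) :=
  (Words l).filter fun w => w.count E + w.count D = m ∧ w.count N + w.count D = n

/-- A word is bad if some prefix contains more N's than E's. -/
def bad (w : List Step) : Bool :=
  (List.range (w.length + 1)).any fun k => (w.take k).count E < (w.take k).count N

/-- Bad Delannoy paths from (0,0) to (n,n) with `l` steps. -/
def BDelSet (n l : ℕ) : Finset (List Step) :=
  (DelSet n n l).filter fun w => bad w

/-- Schröder paths: Delannoy paths to (n,n) never going above the diagonal. -/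
def SchSet (n l : ℕ) : Finset (List Step) :=
  (DelSet n n l).filter fun w => ¬ bad w

/-- Major index of a word w_1 ⋯ w_l with respect to a ranking of the letters:
the sum of all positions i (1 ≤ i ≤ l-1) with w_i > w_{i+1}. -/
def maj (rank : Step → ℕ) (w : List Step) : ℕ :=
  ∑ i ∈ Finset.range (w.length - 1),
    if rank (w.getD (i + 1) E) < rank (w.getD i E) then i + 1 else 0

/-- q-integer [m] = 1 + q + ⋯ + q^{m-1}. -/
noncomputable def qint (m : ℕ) : Polynomial ℚ :=
  ∑ i ∈ Finset.range m, X ^ i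

/-- q-factorial. -/
noncomputable def qfact : ℕ → Polynomial ℚ
  | 0 => 1
  | m + 1 => qfact m * qint (m + 1)

/-- Gaussian binomial coefficient, via the q-Pascal recurrence. -/
noncomputable def qbinom : ℕ → ℕ → Polynomial ℚ
  | _, 0 => 1
  | 0, _ + 1 => 0
  | m + 1, k + 1 => qbinom m k + X ^ (k + 1) * qbinom m (k + 1)

/-- q-trinomial coefficient [l]!/([a]![b]![c]!), defined when a+b+c = l. -/
noncomputable def qbinom3 (l a b c : ℕ) : Polynomial ℚ :=
  if a + b + c = l then qbinom l a * qbinom (l - a) b else 0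

/-- Depth after the first `i` steps: #N − #E. -/
def depth (w : List Step) (i : ℕ) : ℤ :=
  ((w.take i).count N : ℤ) - (w.take i).count E

/-- `k` (0 ≤ k ≤ l) achieves the maximal running depth. -/
def isMaxDepth (w : List Step) (k : ℕ) : Bool :=
  (List.range (w.length + 1)).all fun i => decide (depth w i ≤ depth w k)

/-- The first index (number of steps) at which the running depth is maximal. -/
def firstDeep (w : List Step) : ℕ :=
  (List.range (w.length + 1)).findIdx (isMaxDepth w)

/-- The last index at which the running depth is maximal. -/
def lastDeep (w : List Step) : ℕ :=
  w.length - (List.range (w.length + 1)).reverse.findIdx (isMaxDepth w)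

/-- Replace the first deepest step (the step w_k, k = firstDeep) with E. -/
def phi (w : List Step) : List Step := w.set (firstDeep w - 1) E

/-- Replace the step following the last deepest point with N. -/
def phiInv (w : List Step) : List Step := w.set (lastDeep w) N

/-- Number of consecutive D's immediately after the first deepest step. -/
def runS (w : List Step) : ℕ := ((w.drop (firstDeep w)).takeWhile (· == D)).length

/-- Number of consecutive D's immediately before the first deepest step. -/
def runR (w : List Step) : ℕ :=
  ((w.take (firstDeep w - 1)).reverse.takeWhile (· == D)).length

/-- The window map: replace W₁ = D^r w_k D^s by D^{r-1} E D^{s+1} if r ≥ 1,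
and by D^s E if r = 0. -/
def phiWin (w : List Step) : List Step :=
  let k := firstDeep w - 1
  let r := runR w
  let s := runS w
  let seg : List Step :=
    if 1 ≤ r then List.replicate (r - 1) D ++ [E] ++ List.replicate (s + 1) D
    else List.replicate s D ++ [E]
  w.take (k - r) ++ seg ++ w.drop (k + s + 1)

/-- 0-based index of the first step after which the path is above the diagonal. -/
def firstAbove (w : List Step) : ℕ :=
  (List.range w.length).findIdx fun i =>
    decide ((w.take (i + 1)).count E < (w.take (i + 1)).count N)

/-- The map ψ of Bonin–Shapiro–Simion: replace with E the last N of the maximal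
run of consecutive N's beginning at the first step going above the diagonal. -/
def psi (w : List Step) : List Step :=
  let i := firstAbove w
  let j := i + ((w.drop i).takeWhile (· == N)).length - 1
  w.set j E

/-! ### Auxiliary lemmas -/

/-- Signed value of a step for the depth statistic. -/
def sv : Step → ℤ
  | E => -1
  | D => 0
  | N => 1

lemma depth_zero (w : List Step) : depth w 0 = 0 := by simp [depth]

lemma depth_succ (w : List Step) (i : ℕ) (h : i < w.length) :
    depth w (i + 1) = depth w i + sv (w.getD i E) := by
  have ht : w.take (i + 1) = w.take i ++ [w[i]] := by
    rw [List.take_succ, List.getElem?_eq_getElem h]; rfl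
  rw [List.getD_eq_getElem w E h]
  unfold depth
  rw [ht, List.count_append, List.count_append]
  cases w[i] <;> simp [sv, List.count_cons] <;> push_cast <;> try ring

lemma depth_length (w : List Step) : depth w w.length = (w.count N : ℤ) - w.count E := by
  simp [depth]

lemma isMaxDepth_iff (w : List Step) (k : ℕ) :
    isMaxDepth w k = true ↔ ∀ i ≤ w.length, depth w i ≤ depth w k := by
  unfold isMaxDepth
  rw [List.all_eq_true]
  constructor
  · intro h i hi
    have := h i (List.mem_range.2 (Nat.lt_succ_of_le hi))
    exact of_decide_eq_true this
  · intro h x hx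
    exact decide_eq_true (h x (Nat.lt_succ_iff.1 (List.mem_range.1 hx)))

lemma bad_iff (w : List Step) : bad w = true ↔ ∃ k ≤ w.length, 0 < depth w k := by
  unfold bad
  rw [List.any_eq_true]
  constructor
  · rintro ⟨k, hk, hp⟩
    refine ⟨k, Nat.lt_succ_iff.1 (List.mem_range.1 hk), ?_⟩
    have := of_decide_eq_true hp
    unfold depth; omega
  · rintro ⟨k, hk, hp⟩
    refine ⟨k, List.mem_range.2 (Nat.lt_succ_of_le hk), ?_⟩
    unfold depth at hp
    exact decide_eq_true (by omega)

lemma mem_Words_iff (w : List Step) (l : ℕ) : w ∈ Words l ↔ w.length = l := by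
  unfold Words
  rw [Finset.mem_image]
  constructor
  · rintro ⟨f, _, rfl⟩; simp
  · rintro rfl
    exact ⟨fun i => w[(i : ℕ)], Finset.mem_univ _, List.ofFn_getElem (xs := w)⟩

lemma mem_DelSet_iff (w : List Step) (m n l : ℕ) :
    w ∈ DelSet m n l ↔ w.length = l ∧ w.count E + w.count D = m ∧ w.count N + w.count D = n := by
  unfold DelSet
  rw [Finset.mem_filter, mem_Words_iff]

lemma count_set_int (w : List Step) (j : ℕ) (hj : j < w.length) (c a : Step) :
    ((w.set j c).count a : ℤ) =
      w.count a + (if c = a then 1 else 0) - (if w[j] = a then 1 else 0) := by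
  have hw : w.count a = (w.take j).count a + (w[j] :: w.drop (j + 1)).count a := by
    conv_lhs => rw [← List.take_append_drop j w, ← List.getElem_cons_drop (as := w) (i := j) hj]
    rw [List.count_append]
  have hs : (w.set j c).count a = (w.take j).count a + (c :: w.drop (j + 1)).count a := by
    rw [List.set_eq_take_append_cons_drop, if_pos hj, List.count_append]
  rw [hs, hw, List.count_cons, List.count_cons]
  by_cases p : c = a <;> by_cases q : w[j] = a <;>
    simp [p, q] <;> push_cast <;> try ring

lemma depth_set (w : List Step) (j : ℕ) (hj : j < w.length) (c : Step) (i : ℕ) :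
    depth (w.set j c) i = depth w i + (if j < i then sv c - sv w[j] else 0) := by
  induction i with
  | zero => simp [depth_zero]
  | succ i ih =>
    by_cases hi : i + 1 ≤ w.length
    · have hi' : i < w.length := hi
      have hi'' : i < (w.set j c).length := by rw [List.length_set]; exact hi'
      rw [depth_succ _ i hi'', depth_succ w i hi', ih]
      rw [List.getD_eq_getElem _ E hi'', List.getD_eq_getElem w E hi',
        List.getElem_set]
      by_cases hji : j = i
      · subst hji
        rw [if_pos rfl, if_neg (lt_irrefl j), if_pos (Nat.lt_succ_self j)]
        ring
      · rw [if_neg hji]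
        by_cases hlt : j < i
        · rw [if_pos hlt, if_pos (Nat.lt_succ_of_lt hlt)]
          ring
        · rw [if_neg hlt, if_neg (by omega : ¬ j < i + 1)]
          ring
    · have hL : w.length ≤ i := by omega
      have e1 : depth (w.set j c) (i + 1) = depth (w.set j c) i := by
        unfold depth
        rw [List.take_of_length_le (by rw [List.length_set]; omega),
          List.take_of_length_le (by rw [List.length_set]; omega)]
      have e2 : depth w (i + 1) = depth w i := by
        unfold depth
        rw [List.take_of_length_le (by omega), List.take_of_length_le hL]
      rw [e1, e2, ih]
      have h1 : j < i := by omega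
      rw [if_pos h1, if_pos (by omega : j < i + 1)]

lemma firstDeep_spec (w : List Step) :
    isMaxDepth w (firstDeep w) = true ∧ firstDeep w ≤ w.length ∧
      ∀ j < firstDeep w, isMaxDepth w j = false := by
  set L := w.length with hL
  obtain ⟨k, hk, hmax⟩ := Finset.exists_max_image (Finset.range (L + 1)) (depth w)
    ⟨0, Finset.mem_range.2 (Nat.succ_pos L)⟩
  have hkmax : isMaxDepth w k = true := by
    rw [isMaxDepth_iff]
    intro i hi
    exact hmax i (Finset.mem_range.2 (Nat.lt_succ_of_le hi))
  have hex : ∃ x ∈ List.range (L + 1), isMaxDepth w x = true :=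
    ⟨k, List.mem_range.2 (Finset.mem_range.1 hk), hkmax⟩
  have hlt : (List.range (L + 1)).findIdx (isMaxDepth w) < (List.range (L + 1)).length :=
    List.findIdx_lt_length_of_exists hex
  have hlen : (List.range (L + 1)).length = L + 1 := List.length_range
  have hfd : firstDeep w = (List.range (L + 1)).findIdx (isMaxDepth w) := rfl
  refine ⟨?_, ?_, ?_⟩
  · rw [hfd]
    have := @List.findIdx_getElem _ (isMaxDepth w) (List.range (L + 1)) hlt
    rwa [List.getElem_range] at this
  · rw [hfd]; omega
  · intro j hj
    rw [hfd] at hj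
    have hjl : j < (List.range (L + 1)).length := lt_trans hj hlt
    have := List.not_of_lt_findIdx hj
    rwa [List.getElem_range] at this

lemma lastDeep_spec (w : List Step) :
    isMaxDepth w (lastDeep w) = true ∧ lastDeep w ≤ w.length ∧
      ∀ j, lastDeep w < j → j ≤ w.length → isMaxDepth w j = false := by
  set L := w.length with hL
  obtain ⟨k, hk, hmax⟩ := Finset.exists_max_image (Finset.range (L + 1)) (depth w)
    ⟨0, Finset.mem_range.2 (Nat.succ_pos L)⟩
  have hkmax : isMaxDepth w k = true := by
    rw [isMaxDepth_iff]
    intro i hi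
    exact hmax i (Finset.mem_range.2 (Nat.lt_succ_of_le hi))
  have hklt : k < L + 1 := Finset.mem_range.1 hk
  have hex : ∃ x ∈ (List.range (L + 1)).reverse, isMaxDepth w x = true :=
    ⟨k, List.mem_reverse.2 (List.mem_range.2 hklt), hkmax⟩
  set jd := (List.range (L + 1)).reverse.findIdx (isMaxDepth w) with hjd
  have hlt : jd < (List.range (L + 1)).reverse.length :=
    List.findIdx_lt_length_of_exists hex
  have hlen : (List.range (L + 1)).reverse.length = L + 1 := by
    rw [List.length_reverse, List.length_range]
  have hjdL : jd ≤ L := by omega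
  have hld : lastDeep w = L - jd := rfl
  have hgetjd : (List.range (L + 1)).reverse[jd]'hlt = L - jd := by
    rw [List.getElem_reverse, List.getElem_range]
    congr 1
    rw [List.length_range]
    omega
  refine ⟨?_, ?_, ?_⟩
  · rw [hld]
    have := @List.findIdx_getElem _ (isMaxDepth w) (List.range (L + 1)).reverse hlt
    rwa [hgetjd] at this
  · rw [hld]; omega
  · intro j hj1 hj2
    rw [hld] at hj1
    have hidx : L - j < jd := by omega
    have hjl : L - j < (List.range (L + 1)).reverse.length := by omega
    have hne := List.not_of_lt_findIdx (xs := (List.range (L + 1)).reverse)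
      (p := isMaxDepth w) hidx
    rw [List.getElem_reverse, List.getElem_range] at hne
    simp only [List.length_range] at hne
    have heq : L + 1 - 1 - (L - j) = j := by omega
    rwa [heq] at hne

/-- In the `Del(n+1,n-1,l)` situation: key facts about the last deepest point. -/
lemma keyA (w : List Step) (h2 : (w.count E : ℤ) = w.count N + 2) :
    lastDeep w < w.length ∧ w.getD (lastDeep w) E = E ∧
      (∀ i ≤ w.length, depth w i ≤ depth w (lastDeep w)) ∧
      depth w (lastDeep w + 1) = depth w (lastDeep w) - 1 ∧
      (∀ i, lastDeep w < i → i ≤ w.length → depth w i < depth w (lastDeep w)) := by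
  obtain ⟨hmax, hle, hafter⟩ := lastDeep_spec w
  set k := lastDeep w with hk
  rw [isMaxDepth_iff] at hmax
  have hstrict : ∀ i, k < i → i ≤ w.length → depth w i < depth w k := by
    intro i hi1 hi2
    have hni := hafter i hi1 hi2
    by_contra hcon
    push_neg at hcon
    have : isMaxDepth w i = true := by
      rw [isMaxDepth_iff]
      intro j hj
      exact le_trans (hmax j hj) hcon
    rw [this] at hni; exact Bool.noConfusion hni
  have hdL : depth w w.length = -2 := by rw [depth_length]; omega
  have hk_lt : k < w.length := by
    rcases Nat.lt_or_ge k w.length with h | h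
    · exact h
    · exfalso
      have hkL : k = w.length := le_antisymm hle h
      have h0 : depth w 0 ≤ depth w k := hmax 0 (Nat.zero_le _)
      rw [depth_zero, hkL, hdL] at h0
      omega
  have hstep : depth w (k + 1) = depth w k + sv (w.getD k E) := depth_succ w k hk_lt
  have hlt1 : depth w (k + 1) < depth w k := hstrict (k + 1) (Nat.lt_succ_self k) hk_lt
  have hE : w.getD k E = E := by
    rw [List.getD_eq_getElem w E hk_lt] at hstep ⊢
    cases h : w[k] <;> rw [h] at hstep <;> simp [sv] at hstep <;> omega
  refine ⟨hk_lt, hE, hmax, ?_, hstrict⟩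
  rw [hstep, hE]
  simp only [sv]
  ring

/-- In the bad-path situation: key facts about the first deepest point. -/
lemma keyB (w : List Step) (h0 : (w.count E : ℤ) = w.count N) (hbad : bad w = true) :
    1 ≤ firstDeep w ∧ firstDeep w ≤ w.length ∧
      w.getD (firstDeep w - 1) E = N ∧
      depth w (firstDeep w - 1) = depth w (firstDeep w) - 1 ∧
      (∀ i ≤ w.length, depth w i ≤ depth w (firstDeep w)) ∧
      (∀ i < firstDeep w, depth w i < depth w (firstDeep w)) := by
  obtain ⟨hmax, hle, hbefore⟩ := firstDeep_spec w
  set k := firstDeep w with hk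
  rw [isMaxDepth_iff] at hmax
  have hstrict : ∀ i < k, depth w i < depth w k := by
    intro i hi
    have hni := hbefore i hi
    by_contra hcon
    push_neg at hcon
    have : isMaxDepth w i = true := by
      rw [isMaxDepth_iff]
      intro j hj
      exact le_trans (hmax j hj) hcon
    rw [this] at hni; exact Bool.noConfusion hni
  obtain ⟨m, hm, hdm⟩ := (bad_iff w).1 hbad
  have hpos : 0 < depth w k := lt_of_lt_of_le hdm (hmax m hm)
  have hk1 : 1 ≤ k := by
    by_contra h
    push_neg at h
    interval_cases k
    rw [depth_zero] at hpos; omega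
  have hk1lt : k - 1 < w.length := by omega
  have hstep : depth w (k - 1 + 1) = depth w (k - 1) + sv (w.getD (k - 1) E) :=
    depth_succ w (k - 1) hk1lt
  have hkk : k - 1 + 1 = k := by omega
  rw [hkk] at hstep
  have hlt1 : depth w (k - 1) < depth w k := hstrict (k - 1) (by omega)
  have hN : w.getD (k - 1) E = N := by
    rw [List.getD_eq_getElem w E hk1lt] at hstep ⊢
    cases h : w[k - 1] <;> rw [h] at hstep <;> simp [sv] at hstep <;> omega
  refine ⟨hk1, hle, hN, ?_, hmax, hstrict⟩
  rw [hN] at hstep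
  simp [sv] at hstep
  omega

/-- for W ∈ Del(n+1,n-1,l), the step just after the last deepest
point is an E; replacing it with N gives a bad path in Del(n,n,l); and this is
inverse to the map replacing the first deepest step of a bad path with E. -/
theorem phiInv_inverse (n l : ℕ) (hn : 1 ≤ n) :
    (∀ w ∈ DelSet (n + 1) (n - 1) l,
        w.getD (lastDeep w) E = E ∧ phiInv w ∈ BDelSet n l) ∧
      (∀ w ∈ BDelSet n l, phiInv (phi w) = w) ∧
      (∀ w ∈ DelSet (n + 1) (n - 1) l, phi (phiInv w) = w) := by
  refine ⟨?_, ?_, ?_⟩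
  · -- Part 1
    intro w hw
    rw [mem_DelSet_iff] at hw
    obtain ⟨hlen, hcE, hcN⟩ := hw
    have h2 : (w.count E : ℤ) = w.count N + 2 := by omega
    obtain ⟨hklt, hgE, hmax, hdrop, hstrict⟩ := keyA w h2
    set k := lastDeep w with hk
    have hwk : w[k] = E := by rw [← List.getD_eq_getElem w E hklt]; exact hgE
    have hphi : phiInv w = w.set k N := rfl
    have hlen' : (w.set k N).length = w.length := List.length_set
    refine ⟨hgE, ?_⟩
    rw [BDelSet, Finset.mem_filter]
    have hcE' := count_set_int w k hklt N E
    have hcN' := count_set_int w k hklt N N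
    have hcD' := count_set_int w k hklt N D
    rw [hwk] at hcE' hcN' hcD'
    simp only [reduceIte, reduceCtorEq, if_true, if_false] at hcE' hcN' hcD'
    constructor
    · rw [mem_DelSet_iff, hphi]
      refine ⟨by rw [hlen', hlen], by omega, by omega⟩
    · rw [hphi, bad_iff]
      refine ⟨k + 1, by omega, ?_⟩
      have hd := depth_set w k hklt N (k + 1)
      rw [hwk, if_pos (Nat.lt_succ_self k)] at hd
      simp only [sv] at hd
      have h0 := hmax 0 (Nat.zero_le _)
      rw [depth_zero] at h0
      omega
  · -- Part 2
    intro w hw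
    rw [BDelSet, Finset.mem_filter, mem_DelSet_iff] at hw
    obtain ⟨⟨hlen, hcE, hcN⟩, hbad⟩ := hw
    have h0 : (w.count E : ℤ) = w.count N := by omega
    obtain ⟨hk1, hkle, hgN, hdrop, hmax, hstrict⟩ := keyB w h0 hbad
    set k := firstDeep w with hk
    have hk1lt : k - 1 < w.length := by omega
    have hwk : w[k - 1] = N := by rw [← List.getD_eq_getElem w E hk1lt]; exact hgN
    have hphi : phi w = w.set (k - 1) E := rfl
    set w' := w.set (k - 1) E with hw'
    have hlen' : w'.length = w.length := List.length_set
    have hds : ∀ i, depth w' i = depth w i + (if k - 1 < i then -2 else 0) := by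
      intro i
      rw [hw', depth_set w (k - 1) hk1lt E i, hwk]
      simp only [sv]
      norm_num
    obtain ⟨hmax', hle', hafter'⟩ := lastDeep_spec w'
    set k' := lastDeep w' with hk'
    have hmaxk1 : isMaxDepth w' (k - 1) = true := by
      rw [isMaxDepth_iff]
      intro i hi
      rw [hds i, hds (k - 1), if_neg (lt_irrefl _)]
      rw [hlen'] at hi
      by_cases hik : k - 1 < i
      · rw [if_pos hik]
        have := hmax i hi
        omega
      · rw [if_neg hik]
        have := hstrict i (by omega)
        omega
    have hstrict' : ∀ j, k - 1 < j → j ≤ w.length → depth w' j < depth w' (k - 1) := by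
      intro j hj1 hj2
      rw [hds j, hds (k - 1), if_pos hj1, if_neg (lt_irrefl _)]
      have := hmax j hj2
      omega
    have hk'ge : k - 1 ≤ k' := by
      by_contra h
      push_neg at h
      have hcon := hafter' (k - 1) h (by rw [hlen']; omega)
      rw [hmaxk1] at hcon
      exact Bool.noConfusion hcon
    have hk'le : k' ≤ k - 1 := by
      by_contra h
      push_neg at h
      have h1 := hstrict' k' h (by rw [← hlen']; exact hle')
      rw [isMaxDepth_iff] at hmax'
      have h2 := hmax' (k - 1) (by rw [hlen']; omega)
      omega
    have hkk : k' = k - 1 := le_antisymm hk'le hk'ge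
    have hfix : w.set (k - 1) N = w := by
      apply List.ext_getElem (by rw [List.length_set])
      intro i h1 h2
      rw [List.getElem_set]
      split
      · next h => subst h; exact hwk.symm
      · rfl
    calc phiInv (phi w) = w'.set k' N := by rw [hphi, hw']; rfl
      _ = w'.set (k - 1) N := by rw [hkk]
      _ = w.set (k - 1) N := by rw [hw', List.set_set]
      _ = w := hfix
  · -- Part 3
    intro w hw
    rw [mem_DelSet_iff] at hw
    obtain ⟨hlen, hcE, hcN⟩ := hw
    have h2 : (w.count E : ℤ) = w.count N + 2 := by omega
    obtain ⟨hklt, hgE, hmax, hdrop, hstrict⟩ := keyA w h2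
    set k := lastDeep w with hk
    have hwk : w[k] = E := by rw [← List.getD_eq_getElem w E hklt]; exact hgE
    set w' := w.set k N with hw'
    have hphi : phiInv w = w' := rfl
    have hlen' : w'.length = w.length := List.length_set
    have hds : ∀ i, depth w' i = depth w i + (if k < i then 2 else 0) := by
      intro i
      rw [hw', depth_set w k hklt N i, hwk]
      simp only [sv]
      norm_num
    obtain ⟨hmax', hle', hbefore'⟩ := firstDeep_spec w'
    set k'' := firstDeep w' with hk''
    have hmaxk1 : isMaxDepth w' (k + 1) = true := by
      rw [isMaxDepth_iff]
      intro i hi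
      rw [hds i, hds (k + 1), if_pos (Nat.lt_succ_self k)]
      rw [hlen'] at hi
      by_cases hik : k < i
      · rw [if_pos hik]
        have := hstrict i hik hi
        omega
      · rw [if_neg hik]
        have := hmax i hi
        omega
    have hstrict' : ∀ j, j ≤ k → depth w' j < depth w' (k + 1) := by
      intro j hj
      rw [hds j, hds (k + 1), if_pos (Nat.lt_succ_self k), if_neg (by omega)]
      have := hmax j (by omega)
      omega
    have hk''ge : k + 1 ≤ k'' := by
      by_contra h
      push_neg at h
      have h1 := hstrict' k'' (by omega)
      rw [isMaxDepth_iff] at hmax'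
      have h2 := hmax' (k + 1) (by rw [hlen']; omega)
      omega
    have hk''le : k'' ≤ k + 1 := by
      by_contra h
      push_neg at h
      have hcon := hbefore' (k + 1) h
      rw [hmaxk1] at hcon
      exact Bool.noConfusion hcon
    have hkk : k'' = k + 1 := le_antisymm hk''le hk''ge
    have hfix : w.set k E = w := by
      apply List.ext_getElem (by rw [List.length_set])
      intro i h1 h2
      rw [List.getElem_set]
      split
      · next h => subst h; exact hwk.symm
      · rfl
    calc phi (phiInv w) = w'.set (k'' - 1) E := by rw [hphi]; rfl
      _ = w'.set k E := by rw [hkk, Nat.add_sub_cancel]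
      _ = w.set k E := by rw [hw', List.set_set]
      _ = w := hfix
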